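/- For every bipartite state ρ_AB of dimension m×n, the infimum in the definition of the POVM quantum discord D_P(ρ_AB|B) over all POVMs on ℂ^n equals the infimum over POVMs on ℂ^n consisting of at most n² operators. -/

import Mathlib

open scoped Kronecker ComplexOrder Matrix

noncomputable section

/-- A quantum state (density matrix): positive semidefinite with trace 1. -/
def IsState {α : Type*} [Fintype α] (ρ : Matrix α α ℂ) : Prop :=
  ρ.PosSemidef ∧ ρ.trace = 1

/-- The rank-one matrix `ψ ψ*`. -/
def vecState {α : Type*} (ψ : α → ℂ) : Matrix α α ℂ :=
  fun i j => ψ i * star (ψ j)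

/-- Kronecker product of two vectors. -/
def kronVec {α β : Type*} (a : α → ℂ) (b : β → ℂ) : α × β → ℂ :=
  fun p => a p.1 * b p.2

/-- Partial trace over the first tensor factor. -/
def ptrace1 {α β : Type*} [Fintype α] (M : Matrix (α × β) (α × β) ℂ) : Matrix β β ℂ :=
  fun k k' => ∑ i, M (i, k) (i, k')

/-- Partial trace over the second tensor factor. -/
def ptrace2 {α β : Type*} [Fintype β] (M : Matrix (α × β) (α × β) ℂ) : Matrix α α ℂ :=
  fun i i' => ∑ k, M (i, k) (i', k)

/-- Partial trace over the third factor of a triple tensor product. -/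
def ptrace3 {α β γ : Type*} [Fintype γ]
    (M : Matrix (α × β × γ) (α × β × γ) ℂ) : Matrix (α × β) (α × β) ℂ :=
  fun p q => ∑ t, M (p.1, (p.2, t)) (q.1, (q.2, t))

/-- Partial trace over the middle factor of a triple tensor product. -/
def ptraceMid {α β γ : Type*} [Fintype β]
    (M : Matrix (α × β × γ) (α × β × γ) ℂ) : Matrix (α × γ) (α × γ) ℂ :=
  fun p q => ∑ k, M (p.1, (k, p.2)) (q.1, (k, q.2))

/-- Partial trace over the primed (A' and B') factors of a state on (A⊗A')⊗(B⊗B'). -/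
def ptracePrimes {α α' β β' : Type*} [Fintype α'] [Fintype β']
    (M : Matrix ((α × α') × β × β') ((α × α') × β × β') ℂ) : Matrix (α × β) (α × β) ℂ :=
  fun p q => ∑ s, ∑ t, M ((p.1, s), (p.2, t)) ((q.1, s), (q.2, t))

/-- Partial trace over the unprimed (A and B) factors of a state on (A⊗A')⊗(B⊗B'). -/
def ptraceUnprimed {α α' β β' : Type*} [Fintype α] [Fintype β]
    (M : Matrix ((α × α') × β × β') ((α × α') × β × β') ℂ) : Matrix (α' × β') (α' × β') ℂ :=
  fun p q => ∑ i, ∑ k, M ((i, p.1), (k, p.2)) ((i, q.1), (k, q.2))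

/-- Von Neumann entropy: `S(ρ) = -∑ λᵢ log λᵢ` where λᵢ are the eigenvalues. -/
def vnEntropy {α : Type*} [Fintype α] [DecidableEq α] (ρ : Matrix α α ℂ) : ℝ :=
  if h : ρ.IsHermitian then ∑ i, Real.negMulLog (h.eigenvalues i) else 0

/-- Entanglement of formation. -/
def EoF {α β : Type*} [Fintype α] [Fintype β] [DecidableEq α]
    (ρ : Matrix (α × β) (α × β) ℂ) : ℝ :=
  sInf {x : ℝ | ∃ (k : ℕ) (p : Fin k → ℝ) (ψ : Fin k → α × β → ℂ),
    (∀ i, 0 ≤ p i) ∧ (∀ i, star (ψ i) ⬝ᵥ ψ i = 1) ∧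
    (∑ i, (p i : ℂ) • vecState (ψ i)) = ρ ∧
    x = ∑ i, p i * vnEntropy (ptrace2 (vecState (ψ i)))}

/-- Separability of a bipartite state. -/
def IsSepState {α β : Type*} [Fintype α] [Fintype β]
    (ρ : Matrix (α × β) (α × β) ℂ) : Prop :=
  ∃ (k : ℕ) (p : Fin k → ℝ) (a : Fin k → α → ℂ) (b : Fin k → β → ℂ),
    (∀ i, 0 ≤ p i) ∧ (∑ i, p i) = 1 ∧
    (∀ i, star (a i) ⬝ᵥ a i = 1) ∧ (∀ i, star (b i) ⬝ᵥ b i = 1) ∧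
    ρ = ∑ i, (p i : ℂ) • (vecState (a i) ⊗ₖ vecState (b i))

/-- Classical-classical bipartite states. -/
def IsCC {α β : Type*} [Fintype α] [Fintype β] [DecidableEq α] [DecidableEq β]
    (ρ : Matrix (α × β) (α × β) ℂ) : Prop :=
  ∃ (a : α → α → ℂ) (b : β → β → ℂ) (p : α → β → ℝ),
    (∀ i j, star (a i) ⬝ᵥ a j = if i = j then 1 else 0) ∧
    (∀ i j, star (b i) ⬝ᵥ b j = if i = j then 1 else 0) ∧
    (∀ i j, 0 ≤ p i j) ∧ (∑ i, ∑ j, p i j) = 1 ∧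
    ρ = ∑ i, ∑ j, (p i j : ℂ) • (vecState (a i) ⊗ₖ vecState (b j))

/-- Quantum-classical bipartite states (classical on the second factor). -/
def IsQC {α β : Type*} [Fintype α] [Fintype β] [DecidableEq β]
    (ρ : Matrix (α × β) (α × β) ℂ) : Prop :=
  ∃ (b : β → β → ℂ) (σ : β → Matrix α α ℂ) (p : β → ℝ),
    (∀ i j, star (b i) ⬝ᵥ b j = if i = j then 1 else 0) ∧
    (∀ i, IsState (σ i)) ∧ (∀ i, 0 ≤ p i) ∧ (∑ i, p i) = 1 ∧
    ρ = ∑ i, (p i : ℂ) • (σ i ⊗ₖ vecState (b i))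

/-- A POVM: finitely many positive semidefinite operators summing to the identity. -/
def IsPOVM {γ : Type*} [Fintype γ] [DecidableEq γ] {k : ℕ}
    (P : Fin k → Matrix γ γ ℂ) : Prop :=
  (∀ i, (P i).PosSemidef) ∧ (∑ i, P i) = 1

/-- A von Neumann measurement: pairwise-orthogonal orthogonal projections summing to I. -/
def IsVNMeas {γ : Type*} [Fintype γ] [DecidableEq γ] {k : ℕ}
    (P : Fin k → Matrix γ γ ℂ) : Prop :=
  (∀ i, (P i).IsHermitian) ∧ (∀ i, P i * P i = P i) ∧
  (∀ i j, i ≠ j → P i * P j = 0) ∧ (∑ i, P i) = 1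

/-- The term `pᵢ S(ρ_A^i)` for a measurement operator `P` on the second subsystem,
with the convention that the term vanishes when `pᵢ = 0`. -/
def measTerm {α β : Type*} [Fintype α] [Fintype β] [DecidableEq α] [DecidableEq β]
    (ρ : Matrix (α × β) (α × β) ℂ) (P : Matrix β β ℂ) : ℝ :=
  if _h : (Matrix.trace (ρ * ((1 : Matrix α α ℂ) ⊗ₖ P))).re = 0 then 0
  else (Matrix.trace (ρ * ((1 : Matrix α α ℂ) ⊗ₖ P))).re *
    vnEntropy ((((Matrix.trace (ρ * ((1 : Matrix α α ℂ) ⊗ₖ P))).re : ℂ))⁻¹ •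
      ptrace2 (ρ * ((1 : Matrix α α ℂ) ⊗ₖ P)))

/-- Quantum discord with POVM measurements on the second subsystem. -/
def discordP {α β : Type*} [Fintype α] [Fintype β] [DecidableEq α] [DecidableEq β]
    (ρ : Matrix (α × β) (α × β) ℂ) : ℝ :=
  vnEntropy (ptrace1 ρ) - vnEntropy ρ +
    sInf {x : ℝ | ∃ (k : ℕ) (P : Fin k → Matrix β β ℂ),
      IsPOVM P ∧ x = ∑ i, measTerm ρ (P i)}

/-- Quantum discord with von Neumann measurements on the second subsystem. -/
def discordN {α β : Type*} [Fintype α] [Fintype β] [DecidableEq α] [DecidableEq β]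
    (ρ : Matrix (α × β) (α × β) ℂ) : ℝ :=
  vnEntropy (ptrace1 ρ) - vnEntropy ρ +
    sInf {x : ℝ | ∃ (k : ℕ) (P : Fin k → Matrix β β ℂ),
      IsVNMeas P ∧ x = ∑ i, measTerm ρ (P i)}

/-- The trace norm `‖X‖₁ = tr √(X* X)`. -/
def traceNorm {α : Type*} [Fintype α] [DecidableEq α] (X : Matrix α α ℂ) : ℝ :=
  (((Matrix.posSemidef_conjTranspose_mul_self X).1.eigenvectorUnitary : Matrix α α ℂ) *
    Matrix.diagonal (((↑) : ℝ → ℂ) ∘ Real.sqrt ∘ (Matrix.posSemidef_conjTranspose_mul_self X).1.eigenvalues) *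
    (star (Matrix.posSemidef_conjTranspose_mul_self X).1.eigenvectorUnitary : Matrix α α ℂ)).trace.re

/-- The Frobenius norm `‖X‖₂ = √(tr (X* X))`. -/
def frobNorm {α β : Type*} [Fintype α] [Fintype β] (X : Matrix α β ℂ) : ℝ :=
  Real.sqrt (Matrix.trace (Xᴴ * X)).re

/-- Matrix logarithm taken on the support (eigenvalue 0 is sent to 0). -/
def matLog {α : Type*} [Fintype α] [DecidableEq α] (A : Matrix α α ℂ) : Matrix α α ℂ :=
  if h : A.IsHermitian then
    (Matrix.IsHermitian.eigenvectorUnitary h : Matrix α α ℂ) *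
      Matrix.diagonal (fun i => if h.eigenvalues i = 0 then 0
        else (Real.log (h.eigenvalues i) : ℂ)) *
      (star (Matrix.IsHermitian.eigenvectorUnitary h) : Matrix α α ℂ)
  else 0

end


noncomputable section AuxDiscord

open Matrix in
/-- Real coordinates of a complex matrix that are injective on Hermitian matrices. -/
def hermCoords (n : ℕ) : Matrix (Fin n) (Fin n) ℂ →ₗ[ℝ] (Fin n × Fin n → ℝ) where
  toFun A := fun p => if p.1 ≤ p.2 then (A p.1 p.2).re else (A p.1 p.2).im
  map_add' A B := by
    funext p
    by_cases h : p.1 ≤ p.2 <;> simp [h, Matrix.add_apply]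
  map_smul' c A := by
    funext p
    by_cases h : p.1 ≤ p.2 <;>
      simp [h, Matrix.smul_apply, Complex.smul_re, Complex.smul_im, smul_eq_mul]

lemma hermCoords_eq_zero {n : ℕ} {A : Matrix (Fin n) (Fin n) ℂ} (hA : A.IsHermitian)
    (h : hermCoords n A = 0) : A = 0 := by
  have h1 : ∀ p : Fin n × Fin n,
      (if p.1 ≤ p.2 then (A p.1 p.2).re else (A p.1 p.2).im) = 0 := fun p => congrFun h p
  have key : ∀ i j : Fin n, i ≤ j → A i j = 0 := by
    intro i j hij
    apply Complex.ext
    · simpa [hij] using h1 (i, j)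
    · rcases eq_or_lt_of_le hij with rfl | hlt
      · have h2 := hA.apply i i
        have := congrArg Complex.im h2
        simp only [Complex.star_def, Complex.conj_im] at this
        simpa using this.symm ▸ (by linarith [this] : (A i i).im = 0)
      · have h3 : (A j i).im = 0 := by
          simpa [not_le.mpr hlt] using h1 (j, i)
        have h2 := hA.apply j i
        have := congrArg Complex.im h2
        simp only [Complex.star_def, Complex.conj_im, h3] at this
        simpa using this.symm
  ext i j
  rcases le_or_gt i j with hij | hij
  · simpa using key i j hij
  · rw [Matrix.zero_apply, ← hA.apply i j, key j i hij.le, star_zero]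

lemma exists_dependence {n k : ℕ} (hk : n ^ 2 < k) (P : Fin k → Matrix (Fin n) (Fin n) ℂ)
    (hP : ∀ i, (P i).IsHermitian) :
    ∃ c : Fin k → ℝ, (∃ i, c i ≠ 0) ∧ ∑ i, c i • P i = 0 := by
  have hnli : ¬ LinearIndependent ℝ (fun i => hermCoords n (P i)) := by
    intro hli
    have hcard := hli.fintype_card_le_finrank
    rw [Fintype.card_fin, Module.finrank_pi, Fintype.card_prod, Fintype.card_fin] at hcard
    have : n * n = n ^ 2 := (sq n).symm
    omega
  obtain ⟨c, hc0, i, hci⟩ := Fintype.not_linearIndependent_iff.mp hnli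
  refine ⟨c, ⟨i, hci⟩, ?_⟩
  have hherm : (∑ j, c j • P j).IsHermitian := by
    unfold Matrix.IsHermitian
    rw [Matrix.conjTranspose_sum]
    refine Finset.sum_congr rfl fun j _ => ?_
    rw [Matrix.conjTranspose_smul, (hP j).eq, star_trivial]
  apply hermCoords_eq_zero hherm
  rw [map_sum]
  simpa [map_smul] using hc0

lemma psd_trace_re_pos {d : ℕ} {P : Matrix (Fin d) (Fin d) ℂ} (h : P.PosSemidef)
    (hne : P ≠ 0) : 0 < P.trace.re := by
  have h1 : 0 ≤ P.trace := h.trace_nonneg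
  have h2 : P.trace ≠ 0 := fun h0 => hne (h.trace_eq_zero_iff.mp h0)
  rw [Complex.nonneg_iff] at h1
  rcases h1.1.lt_or_eq with hlt | heq
  · exact hlt
  · exfalso
    apply h2
    apply Complex.ext
    · simp [← heq]
    · simp [← h1.2]

lemma real_smul_matrix {a b : Type*} (s : ℝ) (M : Matrix a b ℂ) : s • M = (s : ℂ) • M := by
  ext i j
  simp [Matrix.smul_apply, Complex.real_smul]

lemma ptrace2_csmul {α β : Type*} [Fintype β] (c : ℂ) (M : Matrix (α × β) (α × β) ℂ) :
    ptrace2 (c • M) = c • ptrace2 M := by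
  ext i i'
  simp [ptrace2, Matrix.smul_apply, smul_eq_mul, Finset.mul_sum]

lemma measTerm_zero {α β : Type*} [Fintype α] [Fintype β] [DecidableEq α] [DecidableEq β]
    (ρ : Matrix (α × β) (α × β) ℂ) : measTerm ρ (0 : Matrix β β ℂ) = 0 := by
  unfold measTerm
  have h0 : (1 : Matrix α α ℂ) ⊗ₖ (0 : Matrix β β ℂ) = 0 := by
    ext p q
    simp [Matrix.kroneckerMap_apply]
  rw [h0, mul_zero, Matrix.trace_zero]
  simp

lemma measTerm_real_smul {α β : Type*} [Fintype α] [Fintype β] [DecidableEq α] [DecidableEq β]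
    (ρ : Matrix (α × β) (α × β) ℂ) (P : Matrix β β ℂ) {s : ℝ} (hs : 0 ≤ s) :
    measTerm ρ (s • P) = s * measTerm ρ P := by
  rw [real_smul_matrix]
  have hkron : (1 : Matrix α α ℂ) ⊗ₖ ((s : ℂ) • P) = (s : ℂ) • ((1 : Matrix α α ℂ) ⊗ₖ P) :=
    Matrix.kronecker_smul _ _ _
  unfold measTerm
  rw [hkron, mul_smul_comm, Matrix.trace_smul]
  set z := Matrix.trace (ρ * ((1 : Matrix α α ℂ) ⊗ₖ P)) with hz
  have hre : ((s : ℂ) • z).re = s * z.re := by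
    simp [smul_eq_mul, Complex.mul_re]
  rw [hre]
  by_cases hz0 : z.re = 0
  · simp [hz0]
  by_cases hs0 : s = 0
  · simp [hs0]
  have hsz : s * z.re ≠ 0 := mul_ne_zero hs0 hz0
  rw [dif_neg hsz, dif_neg hz0, ptrace2_csmul]
  have hscalar : ((s * z.re : ℝ) : ℂ)⁻¹ • (s : ℂ) • ptrace2 (ρ * ((1 : Matrix α α ℂ) ⊗ₖ P)) =
      ((z.re : ℝ) : ℂ)⁻¹ • ptrace2 (ρ * ((1 : Matrix α α ℂ) ⊗ₖ P)) := by
    rw [smul_smul]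
    congr 1
    have hsC : (s : ℂ) ≠ 0 := by exact_mod_cast hs0
    have hzC : (z.re : ℂ) ≠ 0 := by exact_mod_cast hz0
    push_cast
    field_simp
  rw [hscalar]
  ring

lemma posSemidef_real_smul {d : ℕ} {A : Matrix (Fin d) (Fin d) ℂ} (hA : A.PosSemidef)
    {w : ℝ} (hw : 0 ≤ w) : (w • A).PosSemidef := by
  rw [real_smul_matrix]
  constructor
  · unfold Matrix.IsHermitian
    rw [Matrix.conjTranspose_smul, hA.1.eq]
    congr 1
    simp [Complex.star_def, Complex.conj_ofReal]
  · exact (hA.smul (a := (w : ℂ)) (by exact_mod_cast hw)).2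

lemma drop_zero {m n : ℕ} (ρ : Matrix (Fin m × Fin n) (Fin m × Fin n) ℂ) {k : ℕ}
    (Q : Fin (k + 1) → Matrix (Fin n) (Fin n) ℂ) (hQ : IsPOVM Q) (i0 : Fin (k + 1))
    (h0 : Q i0 = 0) :
    ∃ R : Fin k → Matrix (Fin n) (Fin n) ℂ, IsPOVM R ∧
      ∑ i, measTerm ρ (R i) = ∑ i, measTerm ρ (Q i) := by
  refine ⟨fun j => Q (i0.succAbove j), ⟨fun j => hQ.1 _, ?_⟩, ?_⟩
  · have h2 := hQ.2
    rw [Fin.sum_univ_succAbove Q i0, h0, zero_add] at h2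
    exact h2
  · rw [Fin.sum_univ_succAbove (fun i => measTerm ρ (Q i)) i0, h0, measTerm_zero, zero_add]

lemma reduce_povm (m n : ℕ) (ρ : Matrix (Fin m × Fin n) (Fin m × Fin n) ℂ) :
    ∀ k : ℕ, ∀ P : Fin k → Matrix (Fin n) (Fin n) ℂ, IsPOVM P →
    ∃ k', k' ≤ n ^ 2 ∧ ∃ P' : Fin k' → Matrix (Fin n) (Fin n) ℂ,
      IsPOVM P' ∧ ∑ i, measTerm ρ (P' i) ≤ ∑ i, measTerm ρ (P i) := by
  intro k
  induction k using Nat.strong_induction_on with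
  | _ k IH =>
  intro P hP
  by_cases hk : k ≤ n ^ 2
  · exact ⟨k, hk, P, hP, le_rfl⟩
  push_neg at hk
  obtain ⟨k'', rfl⟩ : ∃ k'', k = k'' + 1 := ⟨k - 1, by omega⟩
  obtain ⟨Q, i0, hQ, hQ0, hQle⟩ : ∃ (Q : Fin (k'' + 1) → Matrix (Fin n) (Fin n) ℂ)
      (i0 : Fin (k'' + 1)), IsPOVM Q ∧ Q i0 = 0 ∧
      ∑ i, measTerm ρ (Q i) ≤ ∑ i, measTerm ρ (P i) := by
    by_cases hzero : ∃ i, P i = 0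
    · obtain ⟨i0, h⟩ := hzero
      exact ⟨P, i0, hP, h, le_rfl⟩
    push_neg at hzero
    obtain ⟨c0, hc0ne, hc0sum⟩ := exists_dependence hk P (fun i => (hP.1 i).1)
    obtain ⟨c, hcne, hczero, hcm⟩ : ∃ c : Fin (k'' + 1) → ℝ, (∃ i, c i ≠ 0) ∧
        (∑ i, c i • P i = 0) ∧ 0 ≤ ∑ i, c i * measTerm ρ (P i) := by
      rcases le_or_gt 0 (∑ i, c0 i * measTerm ρ (P i)) with h | h
      · exact ⟨c0, hc0ne, hc0sum, h⟩
      · obtain ⟨i, hi⟩ := hc0ne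
        refine ⟨-c0, ⟨i, by simpa using hi⟩, ?_, ?_⟩
        · have hneg : ∑ j, (-c0) j • P j = -∑ j, c0 j • P j := by
            simp [neg_smul, Finset.sum_neg_distrib]
          rw [hneg, hc0sum, neg_zero]
        · have hneg : ∑ j, (-c0) j * measTerm ρ (P j) = -∑ j, c0 j * measTerm ρ (P j) := by
            simp [neg_mul, Finset.sum_neg_distrib]
          rw [hneg]
          linarith
    have hpos : ∃ i, 0 < c i := by
      by_contra hno
      push_neg at hno
      have htr0 : ∑ i, c i * (P i).trace.re = 0 := by
        have h1 := congrArg Matrix.trace hczero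
        rw [Matrix.trace_sum] at h1
        simp_rw [Matrix.trace_smul] at h1
        have h2 := congrArg Complex.re h1
        rw [Complex.re_sum] at h2
        simpa [Complex.smul_re] using h2
      have hterms : ∀ i ∈ Finset.univ, c i * (P i).trace.re ≤ 0 := fun i _ =>
        mul_nonpos_of_nonpos_of_nonneg (hno i) (psd_trace_re_pos (hP.1 i) (hzero i)).le
      have hall := (Finset.sum_eq_zero_iff_of_nonpos hterms).mp htr0
      obtain ⟨i, hi⟩ := hcne
      have := hall i (Finset.mem_univ i)
      have hτ := psd_trace_re_pos (hP.1 i) (hzero i)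
      exact hi (by nlinarith [mul_eq_zero.mp this])
    obtain ⟨imax, -, hmax⟩ := Finset.exists_max_image Finset.univ c ⟨0, Finset.mem_univ 0⟩
    obtain ⟨ip, hip⟩ := hpos
    have hcmax : 0 < c imax := lt_of_lt_of_le hip (hmax ip (Finset.mem_univ ip))
    set t := (c imax)⁻¹ with htdef
    have ht : 0 < t := inv_pos.mpr hcmax
    set w := fun i => 1 - t * c i with hwdef
    have hw : ∀ i, 0 ≤ w i := by
      intro i
      have h1 : t * c i ≤ t * c imax :=
        mul_le_mul_of_nonneg_left (hmax i (Finset.mem_univ i)) ht.le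
      have h2 : t * c imax = 1 := inv_mul_cancel₀ hcmax.ne'
      simp only [hwdef]
      linarith
    refine ⟨fun i => w i • P i, imax, ⟨fun i => posSemidef_real_smul (hP.1 i) (hw i), ?_⟩, ?_, ?_⟩
    · have hsum : ∑ i, w i • P i = ∑ i, P i - t • ∑ i, c i • P i := by
        rw [Finset.smul_sum, ← Finset.sum_sub_distrib]
        refine Finset.sum_congr rfl fun i _ => ?_
        rw [smul_smul, hwdef]
        rw [sub_smul, one_smul]
      rw [hsum, hczero, smul_zero, sub_zero, hP.2]
    · show w imax • P imax = 0
      have : w imax = 0 := by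
        simp only [hwdef, htdef]
        rw [inv_mul_cancel₀ hcmax.ne']
        ring
      rw [this, zero_smul]
    · show ∑ i, measTerm ρ (w i • P i) ≤ ∑ i, measTerm ρ (P i)
      have hsum : ∑ i, measTerm ρ (w i • P i) =
          ∑ i, measTerm ρ (P i) - t * ∑ i, c i * measTerm ρ (P i) := by
        rw [Finset.mul_sum, ← Finset.sum_sub_distrib]
        refine Finset.sum_congr rfl fun i _ => ?_
        rw [measTerm_real_smul ρ (P i) (hw i), hwdef]
        ring
      rw [hsum]
      nlinarith [mul_nonneg ht.le hcm]
  obtain ⟨R, hR, hRsum⟩ := drop_zero ρ Q hQ i0 hQ0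
  obtain ⟨k', hk', P', hP', hle⟩ := IH k'' (by omega) R hR
  exact ⟨k', hk', P', hP', by linarith⟩

end AuxDiscord

/-- In the definition of the POVM quantum discord `D_P(ρ_AB|B)`, the
infimum over all POVMs on `ℂⁿ` equals the infimum over POVMs with at most `n²`
operators. -/
theorem discord_inf_eq_inf_small_povm (m n : ℕ)
    (ρ : Matrix (Fin m × Fin n) (Fin m × Fin n) ℂ) (hρ : IsState ρ) :
    sInf {x : ℝ | ∃ (k : ℕ) (P : Fin k → Matrix (Fin n) (Fin n) ℂ),
        IsPOVM P ∧ x = ∑ i, measTerm ρ (P i)} =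
      sInf {x : ℝ | ∃ k : ℕ, k ≤ n ^ 2 ∧ ∃ P : Fin k → Matrix (Fin n) (Fin n) ℂ,
        IsPOVM P ∧ x = ∑ i, measTerm ρ (P i)} := by
  apply csInf_eq_csInf_of_forall_exists_le
  · rintro x ⟨k, P, hP, rfl⟩
    obtain ⟨k', hk', P', hP', hle⟩ := reduce_povm m n ρ k P hP
    exact ⟨_, ⟨k', hk', P', hP', rfl⟩, hle⟩
  · rintro y ⟨k, hk, P, hP, rfl⟩
    exact ⟨_, ⟨k, P, hP, rfl⟩, le_rfl⟩
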